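/- Let n be a natural number and k a commutative ring. Let M be the monoid, under composition, of all order-preserving maps f : {0,1,…,n} → {0,1,…,n} with f(0) = 0 (equivalently, the join-preserving endomaps of the totally ordered lattice 0 < 1 < ⋯ < n). Then the monoid algebra k[M] is isomorphic, as a k-algebra, to the direct product ∏_{m=0}^n M_{C(n,m)}(k) of full matrix algebras of sizes the binomial coefficients C(n,m). -/

import Mathlib

/-- The monoid, under composition, of order-preserving maps
`f : {0,…,n} → {0,…,n}` with `f 0 = 0`. -/
def OPMonoid (n : ℕ) : Type :=
  {f : Fin (n + 1) → Fin (n + 1) // Monotone f ∧ f 0 = 0}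

instance (n : ℕ) : Monoid (OPMonoid n) where
  one := ⟨id, monotone_id, rfl⟩
  mul f g := ⟨f.1 ∘ g.1, f.2.1.comp g.2.1, by
    show f.1 (g.1 0) = 0
    rw [g.2.2, f.2.2]⟩
  mul_assoc f g h := rfl
  one_mul f := rfl
  mul_one f := rfl

open Finset

namespace OPProof

variable {n : ℕ}

/-- jump set of `f` -/
def JumpSet (f : Fin (n+1) → Fin (n+1)) : Finset (Fin n) :=
  univ.filter fun s => f s.castSucc < f s.succ

/-- nonzero image set of `f`, shifted down -/
def ImSet (f : Fin (n+1) → Fin (n+1)) : Finset (Fin n) :=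
  univ.filter fun t => ∃ x, f x = t.succ

/-- `f` maps `S` (shifted up) bijectively onto `T` (shifted up) -/
def Cond (f : Fin (n+1) → Fin (n+1)) (S T : Finset (Fin n)) : Prop :=
  S.image (fun s => f s.succ) = T.image Fin.succ

instance (f : Fin (n+1) → Fin (n+1)) (S T : Finset (Fin n)) : Decidable (Cond f S T) :=
  inferInstanceAs (Decidable (_ = _))

lemma succ_le_castSucc_iff {s i : Fin n} : (s.succ : Fin (n+1)) ≤ i.castSucc ↔ s < i := by
  simp only [Fin.le_def, Fin.lt_def, Fin.val_succ, Fin.coe_castSucc]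
  omega

lemma mem_jumpSet {f : Fin (n+1) → Fin (n+1)} {s : Fin n} :
    s ∈ JumpSet f ↔ f s.castSucc < f s.succ := by simp [JumpSet]

lemma mem_imSet {f : Fin (n+1) → Fin (n+1)} {t : Fin n} :
    t ∈ ImSet f ↔ ∃ x, f x = t.succ := by simp [ImSet]

/-- strict monotonicity into jumps -/
lemma lt_of_jump {f : Fin (n+1) → Fin (n+1)} (hf : Monotone f) {s s' : Fin n}
    (hss : s < s') (hj : s' ∈ JumpSet f) : f s.succ < f s'.succ :=
  lt_of_le_of_lt (hf (succ_le_castSucc_iff.mpr hss)) (mem_jumpSet.mp hj)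

lemma strictMonoOn_jump {f : Fin (n+1) → Fin (n+1)} (hf : Monotone f) :
    Set.InjOn (fun s : Fin n => f s.succ) (JumpSet f) := by
  intro a ha b hb hab
  rcases lt_trichotomy a b with h | h | h
  · exact absurd hab (lt_of_jump hf h hb).ne
  · exact h
  · exact absurd hab.symm (lt_of_jump hf h ha).ne

/-- Lemma A : `Cond f (JumpSet f) (ImSet f)` -/
lemma cond_jump_im {f : Fin (n+1) → Fin (n+1)} (hf : Monotone f) (hf0 : f 0 = 0) :
    Cond f (JumpSet f) (ImSet f) := by
  apply Finset.Subset.antisymm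
  · intro y hy
    rcases Finset.mem_image.mp hy with ⟨s, hs, rfl⟩
    have h0 : f s.succ ≠ 0 := by
      intro h
      have := mem_jumpSet.mp hs
      rw [h] at this
      simp [Fin.lt_def] at this
    refine Finset.mem_image.mpr ⟨(f s.succ).pred h0, mem_imSet.mpr ⟨s.succ, (Fin.succ_pred _ _).symm⟩, Fin.succ_pred _ _⟩
  · intro y hy
    rcases Finset.mem_image.mp hy with ⟨t, ht, rfl⟩
    rcases mem_imSet.mp ht with ⟨x, hx⟩
    -- take the minimal preimage
    have hne : (univ.filter fun z : Fin (n+1) => f z = t.succ).Nonempty := ⟨x, by simp [hx]⟩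
    set Y := univ.filter fun z : Fin (n+1) => f z = t.succ with hY
    set y := Y.min' hne with hy'
    have hymem : y ∈ Y := Finset.min'_mem _ _
    have hfy : f y = t.succ := (Finset.mem_filter.mp hymem).2
    have hy0 : y ≠ 0 := fun h => Fin.succ_ne_zero t (by rw [← hfy, h, hf0])
    set s := y.pred hy0 with hs
    have hsy : s.succ = y := Fin.succ_pred _ _
    have hcast : (s.castSucc : Fin (n+1)) < y := by
      have hy0v : y.val ≠ 0 := fun h => hy0 (Fin.ext h)
      rw [Fin.lt_def]
      simp only [Fin.coe_castSucc, hs, Fin.coe_pred]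
      omega
    have hjump : s ∈ JumpSet f := by
      rw [mem_jumpSet, hsy, hfy]
      rcases lt_or_eq_of_le (hf hcast.le) with h | h
      · rwa [hfy] at h
      · exfalso
        have : s.castSucc ∈ Y := by simp [hY, h, hfy]
        have := Finset.min'_le _ _ this
        exact absurd (lt_of_le_of_lt this hcast) (lt_irrefl _)
    exact Finset.mem_image.mpr ⟨s, hjump, by rw [hsy, hfy]⟩

lemma card_jump_eq_card_im {f : Fin (n+1) → Fin (n+1)} (hf : Monotone f) (hf0 : f 0 = 0) :
    (JumpSet f).card = (ImSet f).card := by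
  have h := cond_jump_im hf hf0
  have h1 : ((JumpSet f).image fun s => f s.succ).card = (JumpSet f).card :=
    Finset.card_image_of_injOn (strictMonoOn_jump hf)
  have h2 : ((ImSet f).image Fin.succ).card = (ImSet f).card :=
    Finset.card_image_of_injective _ (Fin.succ_injective n)
  rw [← h1, h, h2]


/-- B1: `T ⊆ ImSet f` -/
lemma subset_imSet {f : Fin (n+1) → Fin (n+1)} {S T : Finset (Fin n)} (hC : Cond f S T) :
    T ⊆ ImSet f := by
  intro t ht
  have : t.succ ∈ T.image Fin.succ := Finset.mem_image_of_mem _ ht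
  rw [← hC] at this
  rcases Finset.mem_image.mp this with ⟨s, _, hs⟩
  exact mem_imSet.mpr ⟨s.succ, hs⟩

/-- in a `Cond` with equal cards, `f ∘ succ` is injective on `S` -/
lemma injOn_of_cond {f : Fin (n+1) → Fin (n+1)} {S T : Finset (Fin n)}
    (hC : Cond f S T) (hST : S.card = T.card) :
    Set.InjOn (fun s : Fin n => f s.succ) S := by
  apply Finset.injOn_of_card_image_eq
  rw [hC, Finset.card_image_of_injective _ (Fin.succ_injective n), hST]

/-- B2: the transversal inequality -/
lemma sum_jump_le {f : Fin (n+1) → Fin (n+1)} (hf : Monotone f) (hf0 : f 0 = 0)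
    {S T : Finset (Fin n)} (hC : Cond f S T) (hST : S.card = T.card)
    (hT : T = ImSet f) :
    (∑ s ∈ JumpSet f, (s : ℕ)) ≤ (∑ s ∈ S, (s : ℕ)) ∧
      ((∑ s ∈ JumpSet f, (s : ℕ)) = (∑ s ∈ S, (s : ℕ)) → S = JumpSet f) := by
  classical
  have hA := cond_jump_im hf hf0
  -- the "drop to the jump" map
  set j : Fin n → Fin n := fun x =>
    if h : ((JumpSet f).filter fun s => f s.succ = f x.succ).Nonempty
    then (((JumpSet f).filter fun s => f s.succ = f x.succ)).min' h else x with hj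
  have hkey : ∀ x ∈ S, j x ∈ JumpSet f ∧ f (j x).succ = f x.succ ∧ j x ≤ x := by
    intro x hx
    have h1 : f x.succ ∈ (JumpSet f).image (fun s => f s.succ) := by
      rw [hA, ← hT, ← hC]
      exact Finset.mem_image_of_mem _ hx
    rcases Finset.mem_image.mp h1 with ⟨s, hs, hfs⟩
    have hne : ((JumpSet f).filter fun s => f s.succ = f x.succ).Nonempty :=
      ⟨s, Finset.mem_filter.mpr ⟨hs, hfs⟩⟩
    have hmem := Finset.min'_mem _ hne
    rw [Finset.mem_filter] at hmem
    have hle : ∀ s' ∈ (JumpSet f).filter fun s => f s.succ = f x.succ, s' ≤ x := by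
      intro s' hs'
      rw [Finset.mem_filter] at hs'
      by_contra hlt
      push_neg at hlt
      exact absurd hs'.2 (lt_of_jump hf hlt hs'.1).ne'
    refine ⟨?_, ?_, ?_⟩
    · simpa [hj, hne] using hmem.1
    · simpa [hj, hne] using hmem.2
    · simpa [hj, hne] using hle _ (Finset.min'_mem _ hne)
  have hinj : Set.InjOn j S := by
    intro a ha b hb hab
    have h1 := hkey a ha
    have h2 := hkey b hb
    have : f a.succ = f b.succ := by rw [← h1.2.1, ← h2.2.1, hab]
    exact injOn_of_cond hC hST ha hb this
  have hsurj : ∀ b ∈ JumpSet f, ∃ a ∈ S, j a = b := by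
    have hcards : (JumpSet f).card ≤ S.card := by
      rw [card_jump_eq_card_im hf hf0, hST, hT]
    have := Finset.surj_on_of_inj_on_of_card_le (s := S) (t := JumpSet f)
      (fun a _ => j a) (fun a ha => (hkey a ha).1)
      (fun a₁ a₂ ha₁ ha₂ h => hinj ha₁ ha₂ h) hcards
    intro b hb
    rcases this b hb with ⟨a, ha, hab⟩
    exact ⟨a, ha, hab.symm⟩
  have hsum : (∑ s ∈ JumpSet f, (s : ℕ)) = ∑ x ∈ S, ((j x : ℕ)) := by
    refine (Finset.sum_nbij (i := j) (fun a ha => (hkey a ha).1) hinj ?_ (fun a _ => rfl)).symm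
    intro b hb
    rcases hsurj b hb with ⟨a, ha, hab⟩
    exact ⟨a, ha, hab⟩
  constructor
  · rw [hsum]
    exact Finset.sum_le_sum fun x hx => by
      have := (hkey x hx).2.2
      exact_mod_cast this
  · intro heq
    have hall : ∀ x ∈ S, j x = x := by
      by_contra hne
      push_neg at hne
      rcases hne with ⟨x, hx, hjx⟩
      have hlt : (∑ x ∈ S, ((j x : ℕ))) < ∑ x ∈ S, (x : ℕ) := by
        apply Finset.sum_lt_sum
        · intro i hi; exact_mod_cast (hkey i hi).2.2
        · refine ⟨x, hx, ?_⟩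
          have hle := (hkey x hx).2.2
          have : j x ≠ x := hjx
          have hlt := lt_of_le_of_ne hle this
          exact_mod_cast hlt
      rw [hsum] at heq; omega
    have hsub : S ⊆ JumpSet f := fun x hx => hall x hx ▸ (hkey x hx).1
    apply Finset.eq_of_subset_of_card_le hsub
    rw [card_jump_eq_card_im hf hf0, ← hT, hST]

/-- Lemma C : uniqueness. -/
lemma eq_of_jump_im_eq {f g : Fin (n+1) → Fin (n+1)}
    (hf : Monotone f) (hf0 : f 0 = 0) (hg : Monotone g) (hg0 : g 0 = 0)
    (hJ : JumpSet f = JumpSet g) (hI : ImSet f = ImSet g) : f = g := by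
  classical
  set S := JumpSet f with hS
  set m := S.card with hm
  have hScard : S.card = m := rfl
  set W := (ImSet f).image Fin.succ with hW
  have hWcard : W.card = m := by
    rw [hW, Finset.card_image_of_injective _ (Fin.succ_injective n),
      ← card_jump_eq_card_im hf hf0]
  -- the two enumerations agree
  have hagree : ∀ x ∈ S, f x.succ = g x.succ := by
    have hemb := S.orderEmbOfFin hScard
    have hmemS : ∀ i : Fin m, S.orderEmbOfFin hScard i ∈ S :=
      fun i => Finset.orderEmbOfFin_mem _ _ _
    have hstrict : ∀ (h : Fin (n+1) → Fin (n+1)), Monotone h → JumpSet h = S →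
        StrictMono (fun i : Fin m => h (S.orderEmbOfFin hScard i).succ) := by
      intro h hh hJh i i' hii
      exact lt_of_jump hh ((S.orderEmbOfFin hScard).strictMono hii)
        (by rw [hJh]; exact hmemS i')
    have hmemW : ∀ (h : Fin (n+1) → Fin (n+1)), Monotone h → h 0 = 0 → JumpSet h = S → ImSet h = ImSet f →
        ∀ i : Fin m, h (S.orderEmbOfFin hScard i).succ ∈ W := by
      intro h hh hh0 hJh hIh i
      have := cond_jump_im hh hh0
      rw [Cond, hJh, hIh] at this
      rw [hW, ← this]
      exact Finset.mem_image_of_mem _ (hmemS i)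
    have h1 := Finset.orderEmbOfFin_unique hWcard
      (f := fun i : Fin m => f (S.orderEmbOfFin hScard i).succ)
      (hmemW f hf hf0 rfl rfl) (hstrict f hf rfl)
    have h2 := Finset.orderEmbOfFin_unique hWcard
      (f := fun i : Fin m => g (S.orderEmbOfFin hScard i).succ)
      (hmemW g hg hg0 hJ.symm hI.symm) (hstrict g hg hJ.symm)
    intro x hx
    have : x ∈ Set.range (S.orderEmbOfFin hScard) := by
      rw [Finset.range_orderEmbOfFin]; exact hx
    rcases this with ⟨i, rfl⟩
    calc f ((S.orderEmbOfFin hScard) i).succ = (W.orderEmbOfFin hWcard) i := congrFun h1 i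
    _ = g ((S.orderEmbOfFin hScard) i).succ := (congrFun h2 i).symm
  funext y
  induction y using Fin.induction with
  | zero => rw [hf0, hg0]
  | succ i ih =>
    by_cases hi : i ∈ S
    · exact hagree i hi
    · have hfi : f i.succ = f i.castSucc := by
        have : ¬ f i.castSucc < f i.succ := fun h => hi (mem_jumpSet.mpr h)
        exact le_antisymm (not_lt.mp this) (hf (Fin.castSucc_le_succ i))
      have hgi : g i.succ = g i.castSucc := by
        have hi' : i ∉ JumpSet g := hJ ▸ hi
        have : ¬ g i.castSucc < g i.succ := fun h => hi' (mem_jumpSet.mpr h)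
        exact le_antisymm (not_lt.mp this) (hg (Fin.castSucc_le_succ i))
      rw [hfi, hgi, ih]

/-- count of `s ∈ S` with `s.succ ≤ x` -/
def cnt (S : Finset (Fin n)) (x : Fin (n+1)) : ℕ :=
  (S.filter fun s => (s.succ : Fin (n+1)) ≤ x).card

lemma cnt_le_card (S : Finset (Fin n)) (x : Fin (n+1)) : cnt S x ≤ S.card :=
  Finset.card_filter_le _ _

lemma cnt_mono (S : Finset (Fin n)) : Monotone (cnt S) := by
  intro x y hxy
  apply Finset.card_le_card
  intro s hs
  rw [Finset.mem_filter] at *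
  exact ⟨hs.1, le_trans hs.2 hxy⟩

lemma cnt_zero (S : Finset (Fin n)) : cnt S 0 = 0 := by
  rw [cnt, Finset.card_eq_zero]
  apply Finset.filter_eq_empty_iff.mpr
  intro s _
  simp [Fin.le_def]

lemma cnt_succ (S : Finset (Fin n)) (i : Fin n) :
    cnt S i.succ = cnt S i.castSucc + (if i ∈ S then 1 else 0) := by
  classical
  have e1 : (S.filter fun s => (s.succ : Fin (n+1)) ≤ i.succ) = S.filter fun s => s ≤ i := by
    apply Finset.filter_congr
    intro s _
    exact Fin.succ_le_succ_iff
  have e2 : (S.filter fun s => (s.succ : Fin (n+1)) ≤ i.castSucc) = S.filter fun s => s < i := by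
    apply Finset.filter_congr
    intro s _
    exact succ_le_castSucc_iff
  have e3 : (S.filter fun s => s ≤ i) = (S.filter fun s => s < i) ∪ S.filter fun s => s = i := by
    rw [← Finset.filter_or]
    apply Finset.filter_congr
    intro s _
    exact le_iff_lt_or_eq
  have hdisj : Disjoint (S.filter fun s => s < i) (S.filter fun s => s = i) := by
    rw [Finset.disjoint_left]
    intro a ha hb
    rw [Finset.mem_filter] at ha hb
    rw [hb.2] at ha
    exact lt_irrefl _ ha.2
  rw [cnt, cnt, e1, e2, e3, Finset.card_union_of_disjoint hdisj, Finset.filter_eq']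
  congr 1
  split <;> simp

variable {m : ℕ}

/-- the standard map with jump set `S` and image set `T` -/
def stdMap (S T : Finset (Fin n)) (hT : T.card = m) : Fin (n+1) → Fin (n+1) :=
  fun x =>
    if h : 0 < cnt S x ∧ cnt S x ≤ m then
      (T.orderEmbOfFin hT ⟨cnt S x - 1, by omega⟩).succ
    else 0

lemma stdMap_zero (S T : Finset (Fin n)) (hT : T.card = m) : stdMap S T hT 0 = 0 := by
  rw [stdMap, dif_neg]
  rw [cnt_zero]
  simp

lemma stdMap_mono (S T : Finset (Fin n)) (hS : S.card = m) (hT : T.card = m) :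
    Monotone (stdMap S T hT) := by
  intro x y hxy
  have hcx := cnt_le_card S x
  have hcy := cnt_le_card S y
  rw [hS] at hcx hcy
  have hmono := cnt_mono S hxy
  simp only [stdMap]
  by_cases h1 : 0 < cnt S x
  · rw [dif_pos ⟨h1, hcx⟩, dif_pos ⟨lt_of_lt_of_le h1 hmono, hcy⟩]
    rw [Fin.succ_le_succ_iff]
    apply (T.orderEmbOfFin hT).monotone
    simp only [Fin.mk_le_mk]
    omega
  · rw [dif_neg (by omega)]
    exact Fin.zero_le _

lemma stdMap_val_of_pos (S T : Finset (Fin n)) (hT : T.card = m) (x : Fin (n+1))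
    (h1 : 0 < cnt S x) (h2 : cnt S x ≤ m) :
    stdMap S T hT x = (T.orderEmbOfFin hT ⟨cnt S x - 1, by omega⟩).succ := by
  rw [stdMap, dif_pos ⟨h1, h2⟩]

lemma jumpSet_stdMap (S T : Finset (Fin n)) (hS : S.card = m) (hT : T.card = m) :
    JumpSet (stdMap S T hT) = S := by
  ext i
  rw [mem_jumpSet]
  have hsucc := cnt_succ S i
  have hle : cnt S i.succ ≤ m := hS ▸ cnt_le_card S i.succ
  have hle' : cnt S i.castSucc ≤ m := hS ▸ cnt_le_card S i.castSucc
  by_cases hi : i ∈ S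
  · rw [if_pos hi] at hsucc
    have hpos : 0 < cnt S i.succ := by omega
    rw [stdMap_val_of_pos S T hT i.succ hpos hle]
    constructor
    · intro _; exact hi
    · intro _
      by_cases hc : 0 < cnt S i.castSucc
      · rw [stdMap_val_of_pos S T hT i.castSucc hc hle']
        rw [Fin.succ_lt_succ_iff]
        apply (T.orderEmbOfFin hT).strictMono
        simp only [Fin.mk_lt_mk]
        omega
      · rw [stdMap, dif_neg (by omega)]
        exact Fin.succ_pos _
  · rw [if_neg hi] at hsucc
    constructor
    · intro hlt
      exfalso
      have hcc : cnt S i.succ = cnt S i.castSucc := by omega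
      simp only [stdMap, hcc] at hlt
      exact lt_irrefl _ hlt
    · intro h; exact absurd h hi

lemma imSet_stdMap_subset (S T : Finset (Fin n)) (hT : T.card = m) :
    ImSet (stdMap S T hT) ⊆ T := by
  intro t ht
  rcases mem_imSet.mp ht with ⟨x, hx⟩
  rw [stdMap] at hx
  split at hx
  · have := Finset.orderEmbOfFin_mem T hT ⟨cnt S x - 1, by omega⟩
    rwa [Fin.succ_injective _ hx] at this
  · exact absurd hx.symm (Fin.succ_ne_zero t)

lemma imSet_stdMap (S T : Finset (Fin n)) (hS : S.card = m) (hT : T.card = m) :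
    ImSet (stdMap S T hT) = T := by
  apply Finset.eq_of_subset_of_card_le (imSet_stdMap_subset S T hT)
  rw [hT, ← card_jump_eq_card_im (stdMap_mono S T hS hT) (stdMap_zero S T hT),
    jumpSet_stdMap S T hS hT, hS]


/-- the weight of a pair -/
def wt (S T : Finset (Fin n)) : ℕ := T.card * (n*n+1) + (n*n - ∑ s ∈ S, (s : ℕ))

lemma sum_le_sq (S : Finset (Fin n)) : (∑ s ∈ S, (s : ℕ)) ≤ n*n := by
  calc (∑ s ∈ S, (s : ℕ)) ≤ ∑ _s ∈ S, n := Finset.sum_le_sum fun s _ => (s.isLt).le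
  _ = S.card * n := by rw [Finset.sum_const, smul_eq_mul]
  _ ≤ n * n := Nat.mul_le_mul_right n (le_trans (Finset.card_le_card (Finset.subset_univ S)) (by simp))

/-- The key triangularity lemma. -/
lemma wt_le {f : Fin (n+1) → Fin (n+1)} (hf : Monotone f) (hf0 : f 0 = 0)
    {S T : Finset (Fin n)} (hC : Cond f S T) (hST : S.card = T.card) :
    wt S T ≤ wt (JumpSet f) (ImSet f) ∧
      (wt S T = wt (JumpSet f) (ImSet f) → S = JumpSet f ∧ T = ImSet f) := by
  have hsub := subset_imSet hC
  have hcard : T.card ≤ (ImSet f).card := Finset.card_le_card hsub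
  have hs1 := sum_le_sq S
  have hs2 := sum_le_sq (JumpSet f)
  rcases lt_or_eq_of_le hcard with hlt | heq
  · constructor
    · calc wt S T ≤ T.card * (n*n+1) + (n*n+1) := by rw [wt]; omega
      _ = (T.card + 1) * (n*n+1) := by ring
      _ ≤ (ImSet f).card * (n*n+1) := Nat.mul_le_mul_right _ hlt
      _ ≤ wt (JumpSet f) (ImSet f) := Nat.le_add_right _ _
    · intro hwt
      exfalso
      have : wt S T < wt (JumpSet f) (ImSet f) := by
        calc wt S T ≤ T.card * (n*n+1) + (n*n) := by rw [wt]; omega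
        _ < (T.card + 1) * (n*n+1) := by nlinarith
        _ ≤ (ImSet f).card * (n*n+1) := Nat.mul_le_mul_right _ hlt
        _ ≤ wt (JumpSet f) (ImSet f) := Nat.le_add_right _ _
      omega
  · have hTeq : T = ImSet f := Finset.eq_of_subset_of_card_le hsub (le_of_eq heq.symm)
    have hsum := sum_jump_le hf hf0 hC hST hTeq
    constructor
    · rw [wt, wt, hTeq]
      omega
    · intro hwt
      rw [wt, wt, hTeq] at hwt
      have : (∑ s ∈ JumpSet f, (s:ℕ)) = ∑ s ∈ S, (s:ℕ) := by omega
      exact ⟨hsum.2 this, hTeq⟩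

/-- subsets of size `m` -/
abbrev Sub (n m : ℕ) : Type := {s : Finset (Fin n) // s.card = m}

/-- the target algebra -/
abbrev TargetAlg (k : Type) [CommRing k] (n : ℕ) : Type :=
  ∀ m : Fin (n+1), Matrix (Sub n (m : ℕ)) (Sub n (m : ℕ)) k

section Rho


lemma cond_comp {f g : Fin (n+1) → Fin (n+1)} {S U T : Finset (Fin n)}
    (hg : Cond g S U) (hf : Cond f U T) : Cond (f ∘ g) S T := by
  rw [Cond] at *
  calc S.image (fun s => (f ∘ g) s.succ) = (S.image fun s => g s.succ).image f := by
        rw [Finset.image_image]; rfl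
  _ = (U.image Fin.succ).image f := by rw [hg]
  _ = U.image (fun u => f u.succ) := by rw [Finset.image_image]; rfl
  _ = T.image Fin.succ := hf

lemma cond_unique {g : Fin (n+1) → Fin (n+1)} {S U U' : Finset (Fin n)}
    (h1 : Cond g S U) (h2 : Cond g S U') : U = U' := by
  rw [Cond] at h1 h2
  have := h1.symm.trans h2
  exact Finset.image_injective (Fin.succ_injective n) (by exact this)

lemma cond_exists {f g : Fin (n+1) → Fin (n+1)} (hf0 : f 0 = 0)
    {S T : Finset (Fin n)} {m : ℕ} (hS : S.card = m) (hT : T.card = m)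
    (hC : Cond (f ∘ g) S T) : ∃ U : Finset (Fin n), U.card = m ∧ Cond g S U ∧ Cond f U T := by
  classical
  set X := S.image (fun s => g s.succ) with hX
  have hXim : X.image f = T.image Fin.succ := by
    rw [hX, Finset.image_image, ← hC]; rfl
  have h0 : (0 : Fin (n+1)) ∉ X := by
    intro h0
    have : f 0 ∈ X.image f := Finset.mem_image_of_mem f h0
    rw [hf0, hXim] at this
    rcases Finset.mem_image.mp this with ⟨t, _, ht⟩
    exact Fin.succ_ne_zero t ht
  have hrange : ∀ x ∈ X, x ∈ Set.range (Fin.succ : Fin n → Fin (n+1)) := by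
    intro x hx
    have hx0 : x ≠ 0 := fun h => h0 (h ▸ hx)
    exact ⟨x.pred hx0, Fin.succ_pred _ _⟩
  set U := X.preimage Fin.succ ((Fin.succ_injective n).injOn) with hU
  have hUim : U.image Fin.succ = X := by
    rw [hU, Finset.image_preimage]
    apply Finset.filter_true_of_mem hrange
  have hXcard : X.card = m := by
    have h1 : X.card ≤ m := hS ▸ Finset.card_image_le
    have h2 : m ≤ X.card := by
      calc m = (T.image Fin.succ).card := by
            rw [Finset.card_image_of_injective _ (Fin.succ_injective n), hT]
      _ = (X.image f).card := by rw [hXim]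
      _ ≤ X.card := Finset.card_image_le
    omega
  refine ⟨U, ?_, ?_, ?_⟩
  · rw [← hXcard, ← hUim, Finset.card_image_of_injective _ (Fin.succ_injective n)]
  · rw [Cond, hUim]
  · have himg : U.image (fun u => f u.succ) = (U.image Fin.succ).image f := by
      rw [Finset.image_image]; rfl
    rw [Cond, himg, hUim, hXim]

/-- the representation -/
def rho (k : Type) [CommRing k] (n : ℕ) : OPMonoid n →* TargetAlg k n where
  toFun f := fun m T S => if Cond f.1 S.1 T.1 then 1 else 0
  map_one' := by
    funext m
    ext T S
    have : Cond (1 : OPMonoid n).1 S.1 T.1 ↔ T = S := by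
      show Cond id S.1 T.1 ↔ T = S
      rw [Cond]
      constructor
      · intro h
        exact (Subtype.ext (Finset.image_injective (Fin.succ_injective n) h)).symm
      · rintro rfl; rfl
    show (if Cond (1 : OPMonoid n).1 S.1 T.1 then (1:k) else 0) = (1 : Matrix (Sub n (m:ℕ)) (Sub n (m:ℕ)) k) T S
    rw [Matrix.one_apply]
    simp only [this]
  map_mul' f g := by
    funext m
    ext T S
    show (if Cond (f.1 ∘ g.1) S.1 T.1 then (1:k) else 0) = ∑ U : Sub n (m:ℕ), (if Cond f.1 U.1 T.1 then (1:k) else 0) * (if Cond g.1 S.1 U.1 then (1:k) else 0)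
    show (if Cond (f.1 ∘ g.1) S.1 T.1 then (1:k) else 0) = _
    by_cases hC : Cond (f.1 ∘ g.1) S.1 T.1
    · rw [if_pos hC]
      rcases cond_exists f.2.2 S.2 T.2 hC with ⟨U, hUcard, hgU, hfU⟩
      rw [Finset.sum_eq_single_of_mem (⟨U, hUcard⟩ : Sub n (m:ℕ)) (Finset.mem_univ _)]
      · rw [if_pos hfU, if_pos hgU, one_mul]
      · intro U' _ hne
        rcases eq_or_ne (U'.1) U with h | h
        · exact absurd (Subtype.ext h) hne
        · rw [if_neg (show ¬ Cond g.1 S.1 U'.1 from fun hgU' => h (cond_unique hgU' hgU)),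
            mul_zero]
    · rw [if_neg hC]
      symm
      apply Finset.sum_eq_zero
      intro U _
      by_cases h1 : Cond g.1 S.1 U.1
      · by_cases h2 : Cond f.1 U.1 T.1
        · exact absurd (cond_comp h1 h2) hC
        · rw [if_neg h2, zero_mul]
      · rw [if_neg h1, mul_zero]


lemma exists_std {m : ℕ} (S T : Finset (Fin n)) (hS : S.card = m) (hT : T.card = m) :
    ∃ f : OPMonoid n, JumpSet f.1 = S ∧ ImSet f.1 = T :=
  ⟨⟨stdMap S T hT, stdMap_mono S T hS hT, stdMap_zero S T hT⟩,
    jumpSet_stdMap S T hS hT, imSet_stdMap S T hS hT⟩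

lemma rho_apply (k : Type) [CommRing k] {n : ℕ} (f : OPMonoid n) (m : Fin (n+1))
    (T S : Sub n (m:ℕ)) :
    rho k n f m T S = if Cond f.1 S.1 T.1 then 1 else 0 := rfl

lemma pi_single_sum {ι : Type} [DecidableEq ι] (Z : ι → Type) [∀ i, AddCommMonoid (Z i)]
    (i : ι) {γ : Type} (s : Finset γ) (g : γ → Z i) :
    Pi.single i (∑ x ∈ s, g x) = ∑ x ∈ s, Pi.single i (g x) :=
  map_sum (AddMonoidHom.single Z i) g s

abbrev Idx (n : ℕ) : Type := Σ m : Fin (n+1), Sub n (m : ℕ) × Sub n (m : ℕ)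

/-- basis elements of the target -/
noncomputable def pUnit (k : Type) [CommRing k] (n : ℕ) (i : Idx n) : TargetAlg k n :=
  Pi.single i.1 (Matrix.single i.2.1 i.2.2 1)

/-- weight of an index -/
def iwt (n : ℕ) (i : Idx n) : ℕ := wt i.2.2.1 i.2.1.1

variable (k : Type) [CommRing k] (n : ℕ)

lemma expand (y : TargetAlg k n) :
    y = ∑ i : Idx n, y i.1 i.2.1 i.2.2 • pUnit k n i := by
  rw [← Finset.univ_sigma_univ, Finset.sum_sigma]
  conv_lhs => rw [← Finset.univ_sum_single y]
  apply Finset.sum_congr rfl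
  intro m _
  rw [Fintype.sum_prod_type]
  have h1 : y m = ∑ T, ∑ S, Matrix.single T S (y m T S) :=
    Matrix.matrix_eq_sum_single (y m)
  conv_lhs => rw [h1]
  rw [pi_single_sum (fun j : Fin (n+1) => Matrix (Sub n (j:ℕ)) (Sub n (j:ℕ)) k) m]
  apply Finset.sum_congr rfl
  intro T _
  rw [pi_single_sum (fun j : Fin (n+1) => Matrix (Sub n (j:ℕ)) (Sub n (j:ℕ)) k) m]
  apply Finset.sum_congr rfl
  intro S _
  have h2 : Matrix.single T S (y m T S) = (y m T S) • Matrix.single T S 1 := by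
    rw [Matrix.smul_single, smul_eq_mul, mul_one]
  rw [h2, Pi.single_smul]
  rfl

/-- the lifted algebra hom -/
noncomputable def Phi (k : Type) [CommRing k] (n : ℕ) : MonoidAlgebra k (OPMonoid n) →ₐ[k] TargetAlg k n :=
  MonoidAlgebra.lift k (TargetAlg k n) (OPMonoid n) (rho k n)

lemma idx_eq {n : ℕ} {m m' : Fin (n+1)} {T S : Sub n (m:ℕ)} {T' S' : Sub n (m':ℕ)}
    (hS : S'.1 = S.1) (hT : T'.1 = T.1) :
    (⟨m', T', S'⟩ : Idx n) = ⟨m, T, S⟩ := by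
  have hm : m' = m := by
    apply Fin.ext
    rw [← S'.2, hS, S.2]
  subst hm
  have : S' = S := Subtype.ext hS
  have h2 : T' = T := Subtype.ext hT
  rw [this, h2]

lemma pUnit_mem_range : ∀ (N : ℕ) (i : Idx n), iwt n i < N →
    pUnit k n i ∈ LinearMap.range (Phi k n).toLinearMap := by
  intro N
  induction N with
  | zero => intro i h; omega
  | succ N ih =>
    rintro ⟨m, T, S⟩ hlt
    rcases exists_std S.1 T.1 S.2 T.2 with ⟨f₀, hJ, hI⟩
    have hrho : rho k n f₀ ∈ LinearMap.range (Phi k n).toLinearMap := by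
      refine ⟨MonoidAlgebra.single f₀ 1, ?_⟩
      show Phi k n (MonoidAlgebra.single f₀ 1) = _
      rw [Phi, MonoidAlgebra.lift_single, one_smul]
    have hexp := expand k n (rho k n f₀)
    rw [← Finset.add_sum_erase _ _ (Finset.mem_univ (⟨m, T, S⟩ : Idx n))] at hexp
    have hdiag : rho k n f₀ m T S = 1 := by
      rw [rho_apply _, if_pos]
      rw [← hJ, ← hI]
      exact cond_jump_im f₀.2.1 f₀.2.2
    rw [hdiag, one_smul] at hexp
    have hEeq : pUnit k n ⟨m, T, S⟩
        = rho k n f₀ - ∑ j ∈ Finset.univ.erase (⟨m, T, S⟩ : Idx n),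
            rho k n f₀ j.1 j.2.1 j.2.2 • pUnit k n j :=
      eq_sub_of_add_eq hexp.symm
    rw [hEeq]
    apply sub_mem hrho
    apply Submodule.sum_mem
    rintro ⟨m', T', S'⟩ hj
    have hjne : (⟨m', T', S'⟩ : Idx n) ≠ ⟨m, T, S⟩ := Finset.ne_of_mem_erase hj
    by_cases hc : Cond f₀.1 S'.1 T'.1
    · have hwt := wt_le f₀.2.1 f₀.2.2 hc (by rw [S'.2, T'.2])
      rw [hJ, hI] at hwt
      have hlt' : wt S'.1 T'.1 < wt S.1 T.1 := by
        rcases lt_or_eq_of_le hwt.1 with h | h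
        · exact h
        · exact absurd (idx_eq (hwt.2 h).1 (hwt.2 h).2) hjne
      apply Submodule.smul_mem
      apply ih
      have : iwt n (⟨m, T, S⟩ : Idx n) = wt S.1 T.1 := rfl
      rw [iwt]
      simp only []
      omega
    · rw [rho_apply _, if_neg hc, zero_smul]
      exact Submodule.zero_mem _

lemma Phi_surjective : Function.Surjective (Phi k n) := by
  have : ∀ y : TargetAlg k n, y ∈ LinearMap.range (Phi k n).toLinearMap := by
    intro y
    rw [expand k n y]
    apply Submodule.sum_mem
    intro i _
    exact Submodule.smul_mem _ _ (pUnit_mem_range k n (iwt n i + 1) i (by omega))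
  intro y
  rcases this y with ⟨x, hx⟩
  exact ⟨x, hx⟩

lemma Phi_apply_entry (x : MonoidAlgebra k (OPMonoid n)) (m : Fin (n+1)) (T S : Sub n (m:ℕ)) :
    Phi k n x m T S = ∑ g ∈ x.coeff.support, x.coeff g * (if Cond g.1 S.1 T.1 then 1 else 0) := by
  rw [Phi, MonoidAlgebra.lift_apply, Finsupp.sum, Finset.sum_apply, Matrix.sum_apply]
  apply Finset.sum_congr rfl
  intro g _
  simp only [Pi.smul_apply, Matrix.smul_apply, smul_eq_mul, rho_apply]

lemma Phi_injective : Function.Injective (Phi k n) := by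
  rw [injective_iff_map_eq_zero]
  intro x hx
  by_contra hne
  have hsupp : x.coeff.support.Nonempty := Finsupp.support_nonempty_iff.mpr (mt MonoidAlgebra.coeff_eq_zero.mp hne)
  rcases Finset.exists_max_image x.coeff.support (fun g => wt (JumpSet g.1) (ImSet g.1)) hsupp
    with ⟨f, hfmem, hfmax⟩
  have hcard : (ImSet f.1).card ≤ n :=
    le_trans (Finset.card_le_card (Finset.subset_univ _)) (by simp)
  set m : Fin (n+1) := ⟨(ImSet f.1).card, by omega⟩ with hm
  have hScard : (JumpSet f.1).card = (m : ℕ) := card_jump_eq_card_im f.2.1 f.2.2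
  set T : Sub n (m:ℕ) := ⟨ImSet f.1, rfl⟩ with hT
  set S : Sub n (m:ℕ) := ⟨JumpSet f.1, hScard⟩ with hS
  have hzero : Phi k n x m T S = 0 := by rw [hx]; rfl
  rw [Phi_apply_entry] at hzero
  rw [Finset.sum_eq_single_of_mem f hfmem] at hzero
  · rw [if_pos (cond_jump_im f.2.1 f.2.2), mul_one] at hzero
    exact (Finsupp.mem_support_iff.mp hfmem) hzero
  · intro g hgmem hgne
    rw [if_neg, mul_zero]
    intro hC
    have h1 := wt_le g.2.1 g.2.2 hC (hScard.trans (T.2.symm))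
    have h2 := hfmax g hgmem
    have h3 : wt (JumpSet f.1) (ImSet f.1) = wt (JumpSet g.1) (ImSet g.1) :=
      le_antisymm (h1.1) h2
    have h4 := h1.2 h3
    exact hgne (Subtype.ext (eq_of_jump_im_eq g.2.1 g.2.2 f.2.1 f.2.2 h4.1.symm h4.2.symm))


end Rho
end OPProof

/-- **Statement 15.** The monoid algebra `k[M]`, for `M` the monoid of order-preserving
maps `{0,…,n} → {0,…,n}` fixing `0`, is isomorphic as a `k`-algebra to the direct
product of matrix algebras `∏_{m=0}^n M_{C(n,m)}(k)`. -/
theorem monoidAlgebra_totalOrder_iso_matrix (k : Type) [CommRing k] (n : ℕ) :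
    Nonempty (MonoidAlgebra k (OPMonoid n) ≃ₐ[k]
      (∀ m : Fin (n + 1), Matrix (Fin (n.choose (m : ℕ))) (Fin (n.choose (m : ℕ))) k)) := by
  classical
  have e1 : MonoidAlgebra k (OPMonoid n) ≃ₐ[k] OPProof.TargetAlg k n :=
    AlgEquiv.ofBijective (OPProof.Phi k n)
      ⟨OPProof.Phi_injective k n, OPProof.Phi_surjective k n⟩
  have e2 : OPProof.TargetAlg k n ≃ₐ[k]
      (∀ m : Fin (n + 1), Matrix (Fin (n.choose (m : ℕ))) (Fin (n.choose (m : ℕ))) k) := by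
    apply AlgEquiv.piCongrRight
    intro m
    apply Matrix.reindexAlgEquiv k k
    apply Fintype.equivFinOfCardEq
    rw [Fintype.card_finset_len, Fintype.card_fin]
  exact ⟨e1.trans e2⟩
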